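/- Weak uncertainty principle: let φ ∈ L²(ℝ, ℂ) with ‖φ‖_{L²} = 1, ψ a unit-norm real window, and V_ψφ(x,ω) = √2 ∫_ℝ e^{−2πiωt} ψ(x−t)φ(t)dt. If U ⊆ ℝ² is measurable and ∫_U |V_ψφ(x,ω)|² dx dω ≥ 1 − ε for some ε ≥ 0, then the Lebesgue measure of U satisfies |U| ≥ (1 − ε)/2. -/

import Mathlib

open Complex MeasureTheory

/-- The short-time Fourier transform with window `ψ`:
`V_ψ f(x, ω) = √2 ∫ e^{-2πiωt} ψ(x − t) f(t) dt`. -/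
noncomputable def STFT (ψ : ℝ → ℝ) (f : ℝ → ℂ) (q : ℝ × ℝ) : ℂ :=
  (Real.sqrt 2 : ℂ) * ∫ t : ℝ,
    Complex.exp (-2 * (Real.pi : ℂ) * Complex.I * (q.2 : ℂ) * (t : ℂ)) * (ψ (q.1 - t) : ℂ) * f t

theorem STFT_weak_uncertainty (ψ : ℝ → ℝ)
    (hψmem : MemLp (fun t => (ψ t : ℂ)) 2 (volume : Measure ℝ))
    (hψ : ∫ t : ℝ, (ψ t) ^ 2 = 1)
    (f : ℝ → ℂ) (hf : MemLp f 2 (volume : Measure ℝ))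
    (hfnorm : ∫ t : ℝ, ‖f t‖ ^ 2 = 1)
    (U : Set (ℝ × ℝ)) (hU : MeasurableSet U) (ε : ℝ) (hε : 0 ≤ ε)
    (hconc : 1 - ε ≤ ∫ q in U, ‖STFT ψ f q‖ ^ 2) :
    ENNReal.ofReal ((1 - ε) / 2) ≤ volume U := by
  -- pointwise bound ‖STFT ψ f q‖ ^ 2 ≤ 2
  have hrpow : ∀ x : ℝ, |x| ^ (2 : ℝ) = x ^ 2 := fun x => by
    rw [show (2 : ℝ) = ((2 : ℕ) : ℝ) by norm_num, Real.rpow_natCast]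
    exact sq_abs x
  have hbound : ∀ q : ℝ × ℝ, ‖STFT ψ f q‖ ^ 2 ≤ 2 := by
    intro q
    obtain ⟨x, ω⟩ := q
    set g : ℝ → ℂ := fun t =>
      Complex.exp (-2 * (Real.pi : ℂ) * Complex.I * (ω : ℂ) * (t : ℂ)) * (ψ (x - t) : ℂ) * f t
      with hg
    have hnormg : ∀ t, ‖g t‖ = ‖(fun s => (ψ (x - s) : ℂ)) t‖ * ‖f t‖ := by
      intro t
      have hre : (-2 * (Real.pi : ℂ) * Complex.I * (ω : ℂ) * (t : ℂ)).re = 0 := by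
        simp [Complex.mul_re, Complex.mul_im]
      simp [hg, norm_mul, Complex.norm_exp, hre]
    have hψx : MemLp (fun t => (ψ (x - t) : ℂ)) 2 (volume : Measure ℝ) :=
      hψmem.comp_measurePreserving (MeasureTheory.Measure.measurePreserving_sub_left volume x)
    have hconj : Real.HolderConjugate 2 2 := Real.holderConjugate_iff.mpr ⟨by norm_num, by norm_num⟩
    have h2 : (ENNReal.ofReal (2 : ℝ)) = (2 : ENNReal) := by norm_num
    have hCS := integral_mul_norm_le_Lp_mul_Lq (μ := (volume : Measure ℝ)) hconj
      (h2 ▸ hψx) (h2 ▸ hf)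
    have hψint : ∫ t : ℝ, ‖(fun s => (ψ (x - s) : ℂ)) t‖ ^ (2 : ℝ) = 1 := by
      have : ∀ t : ℝ, ‖(fun s => (ψ (x - s) : ℂ)) t‖ ^ (2 : ℝ) = (fun s => ψ s ^ 2) (x - t) := by
        intro t
        simp only [Complex.norm_real, Real.norm_eq_abs]
        exact hrpow _
      rw [integral_congr_ae (Filter.Eventually.of_forall this),
        integral_sub_left_eq_self (fun s => ψ s ^ 2) volume x, hψ]
    have hfint : ∫ t : ℝ, ‖f t‖ ^ (2 : ℝ) = 1 := by
      have : ∀ t : ℝ, ‖f t‖ ^ (2 : ℝ) = |‖f t‖| ^ (2 : ℝ) := fun t => by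
        rw [_root_.abs_of_nonneg (norm_nonneg _)]
      rw [integral_congr_ae (Filter.Eventually.of_forall this)]
      simp_rw [hrpow]
      exact hfnorm
    rw [hψint, hfint] at hCS
    have hInt : ∫ t : ℝ, ‖g t‖ ≤ 1 := by
      calc ∫ t : ℝ, ‖g t‖ = ∫ t : ℝ, ‖(fun s => (ψ (x - s) : ℂ)) t‖ * ‖f t‖ :=
            integral_congr_ae (Filter.Eventually.of_forall hnormg)
        _ ≤ 1 ^ ((1 : ℝ) / 2) * 1 ^ ((1 : ℝ) / 2) := hCS
        _ = 1 := by norm_num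
    have hnormI : ‖∫ t : ℝ, g t‖ ≤ 1 := le_trans (norm_integral_le_integral_norm g) hInt
    have hSTFT : ‖STFT ψ f (x, ω)‖ ≤ Real.sqrt 2 := by
      rw [STFT]
      rw [norm_mul]
      have : ‖((Real.sqrt 2 : ℝ) : ℂ)‖ = Real.sqrt 2 := by
        rw [Complex.norm_real, Real.norm_eq_abs, _root_.abs_of_nonneg (Real.sqrt_nonneg 2)]
      rw [this]
      calc Real.sqrt 2 * ‖∫ t : ℝ, g t‖ ≤ Real.sqrt 2 * 1 :=
            mul_le_mul_of_nonneg_left hnormI (Real.sqrt_nonneg 2)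
        _ = Real.sqrt 2 := mul_one _
    calc ‖STFT ψ f (x, ω)‖ ^ 2 ≤ Real.sqrt 2 ^ 2 := by
          apply pow_le_pow_left₀ (norm_nonneg _) hSTFT
      _ = 2 := Real.sq_sqrt (by norm_num)
  -- now the measure bound
  rcases eq_top_or_lt_top (volume U) with htop | hfin
  · rw [htop]; exact le_top
  · have hnorm : ‖∫ q in U, ‖STFT ψ f q‖ ^ 2‖ ≤ 2 * (volume U).toReal := by
      apply norm_setIntegral_le_of_norm_le_const_ae' hfin
      exact Filter.Eventually.of_forall fun q _ => by
        rw [Real.norm_eq_abs, _root_.abs_of_nonneg (sq_nonneg _)]; exact hbound q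
    have h1 : 1 - ε ≤ 2 * (volume U).toReal := by
      calc 1 - ε ≤ ∫ q in U, ‖STFT ψ f q‖ ^ 2 := hconc
        _ ≤ ‖∫ q in U, ‖STFT ψ f q‖ ^ 2‖ := le_abs_self _
        _ ≤ 2 * (volume U).toReal := hnorm
    have h2 : (1 - ε) / 2 ≤ (volume U).toReal := by linarith
    calc ENNReal.ofReal ((1 - ε) / 2) ≤ ENNReal.ofReal ((volume U).toReal) :=
          ENNReal.ofReal_le_ofReal h2
      _ = volume U := ENNReal.ofReal_toReal hfin.ne
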